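/- Let N : ℝ² → ℝ be a functional with N(z) ≥ 0 for all z, N(z) > 0 for z ≠ (0,0), and N(t•z) = t·N(z) for all t ≥ 0. For φ ∈ ℝ write N(φ) = N(cos φ, sin φ). Let p, q be real numbers with q > 0. If r > 0 and φ ∈ ℝ with sin φ ≠ 0 are such that z = (r·cos φ, r·sin φ) satisfies Q(z)•(z⊛z) + p•z + q•(1,0) = (0,0), where Q(z) = N(z)²/N(z⊛z), then N(φ)²·cos²φ / N(2φ) = p²/(4q) and r = √(q·N(2φ)) / N(φ). -/

import Mathlib

/-- Circular vector-valued vector product on ℝ². -/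
def circMul (z w : ℝ × ℝ) : ℝ × ℝ :=
  (z.1 * w.1 - z.2 * w.2, z.1 * w.2 + w.1 * z.2)

/-- `Q` associated with a phs-functional `N`. -/
noncomputable def Qfun (N : ℝ × ℝ → ℝ) (z : ℝ × ℝ) : ℝ := (N z) ^ 2 / N (circMul z z)

/-- `N` evaluated on the unit circle at angle `φ`: `N(φ) = N(cos φ, sin φ)`. -/
noncomputable def Nang (N : ℝ × ℝ → ℝ) (φ : ℝ) : ℝ := N (Real.cos φ, Real.sin φ)

theorem stmt_7 (N : ℝ × ℝ → ℝ)
    (hN0 : ∀ z, 0 ≤ N z) (hNpos : ∀ z : ℝ × ℝ, z ≠ (0, 0) → 0 < N z)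
    (hNhom : ∀ (t : ℝ), 0 ≤ t → ∀ z : ℝ × ℝ, N (t • z) = t * N z)
    (p q : ℝ) (hq : q > 0) (r φ : ℝ) (hr : r > 0) (hφ : Real.sin φ ≠ 0)
    (hz : Qfun N (r * Real.cos φ, r * Real.sin φ) •
          circMul (r * Real.cos φ, r * Real.sin φ) (r * Real.cos φ, r * Real.sin φ)
        + p • ((r * Real.cos φ : ℝ), (r * Real.sin φ : ℝ))
        + q • ((1 : ℝ), (0 : ℝ)) = (0, 0)) :
    (Nang N φ) ^ 2 * (Real.cos φ) ^ 2 / Nang N (2 * φ) = p ^ 2 / (4 * q) ∧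
      r = Real.sqrt (q * Nang N (2 * φ)) / Nang N φ := by
  set c := Real.cos φ
  set s := Real.sin φ
  have hsc : s ^ 2 + c ^ 2 = 1 := Real.sin_sq_add_cos_sq φ
  have hNA : 0 < Nang N φ := hNpos _ (by
    intro h
    exact hφ (by simpa using congrArg Prod.snd h))
  have hNB : 0 < Nang N (2 * φ) := hNpos _ (by
    intro h
    have h1 := congrArg Prod.fst h
    have h2 := congrArg Prod.snd h
    simp at h1 h2
    have := Real.sin_sq_add_cos_sq (2 * φ)
    rw [h1, h2] at this
    norm_num at this)
  set NA := Nang N φ with hNAdef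
  set NB := Nang N (2 * φ) with hNBdef
  have hN1 : N (r * c, r * s) = r * NA := by
    have := hNhom r hr.le (c, s)
    simp only [Prod.smul_mk, smul_eq_mul] at this
    exact this
  have hc2 : circMul ((r * c, r * s) : ℝ × ℝ) (r * c, r * s)
      = (r ^ 2) • ((Real.cos (2 * φ), Real.sin (2 * φ)) : ℝ × ℝ) := by
    simp only [circMul, Prod.smul_mk, smul_eq_mul, Real.cos_two_mul, Real.sin_two_mul,
      Prod.mk.injEq]
    constructor
    · nlinarith [hsc]
    · ring
  have hN2 : N (circMul ((r * c, r * s) : ℝ × ℝ) (r * c, r * s)) = r ^ 2 * NB := by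
    rw [hc2, hNhom (r ^ 2) (by positivity)]
    rfl
  have hQ : Qfun N (r * c, r * s) = NA ^ 2 / NB := by
    rw [Qfun, hN1, hN2]
    field_simp
  set Q : ℝ := NA ^ 2 / NB with hQdef
  have hQpos : 0 < Q := by positivity
  rw [hQ] at hz
  have h1 : Q * (r * c * (r * c) - r * s * (r * s)) + p * (r * c) + q * 1 = 0 := by
    have := congrArg Prod.fst hz
    simpa [circMul, Prod.ext_iff, smul_eq_mul] using this
  have h2 : Q * (r * c * (r * s) + r * c * (r * s)) + p * (r * s) = 0 := by
    have := congrArg Prod.snd hz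
    simpa [circMul, Prod.ext_iff, smul_eq_mul] using this
  have h2' : 2 * Q * r * c + p = 0 := by
    have hrs : r * s ≠ 0 := mul_ne_zero (ne_of_gt hr) hφ
    have : (r * s) * (2 * Q * r * c + p) = 0 := by linarith [h2]; 
    rcases mul_eq_zero.mp this with h | h
    · exact absurd h hrs
    · exact h
  have hr2 : Q * r ^ 2 = q := by
    linear_combination (-1) * h1 + (r * c) * h2' + (-(Q * r ^ 2)) * hsc
  have hNAQ : NA ^ 2 = Q * NB := by
    rw [hQdef, div_mul_cancel₀ _ (ne_of_gt hNB)]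
  constructor
  · rw [div_eq_div_iff (ne_of_gt hNB) (by positivity)]
    have hp2 : p ^ 2 = 4 * q * Q * c ^ 2 := by
      linear_combination (p - 2 * Q * r * c) * h2' + 4 * Q * c ^ 2 * hr2
    rw [hNAQ]
    rw [hp2]
    ring
  · have hkey : q * NB = (r * NA) ^ 2 := by
      rw [← hr2, hQdef]
      field_simp
    have : Real.sqrt (q * NB) = r * NA := by
      rw [hkey]
      exact Real.sqrt_sq (by positivity)
    rw [this]
    field_simp
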